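/- Let X be an ℝ^d-valued random variable with density ρ, P : ℝ^d → ℝ continuous, and R ∈ ℝ^d such that (i) e^{⟨R,·⟩}P ∈ L^1(ℝ^d) with P̂(·+iR) ∈ L^1(ℝ^d) and (ii) E[e^{−⟨R,X⟩}] < ∞. Then E[P(X)] = (2π)^{−d} ∫_{ℝ^d} Φ_X(u + iR) P̂(u + iR) du, where Φ_X(z) = E[e^{i⟨z,X⟩}]. In particular the integral is real. -/

import Mathlib

open MeasureTheory Complex FourierTransform
open scoped RealInnerProductSpace

/-- Fourier inversion with the "math" convention `ĝ(u) = ∫ e^{-i⟨u,y⟩} g(y) dy`,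
`g(x) = (2π)^{-n} ∫ e^{i⟨u,x⟩} ĝ(u) du`, on a finite-dimensional inner product space. -/
lemma inv_aux {V : Type*} [NormedAddCommGroup V] [InnerProductSpace ℝ V]
    [MeasurableSpace V] [BorelSpace V] [FiniteDimensional ℝ V]
    (g : V → ℂ) (hc : Continuous g) (hi : Integrable g)
    (hG : Integrable (fun u : V => ∫ y : V, Complex.exp (-(Complex.I * (⟪u, y⟫ : ℂ))) * g y))
    (x : V) :
    g x = (((2 * Real.pi) ^ (Module.finrank ℝ V))⁻¹ : ℝ) *
      ∫ u : V, Complex.exp (Complex.I * (⟪u, x⟫ : ℂ)) *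
        ∫ y : V, Complex.exp (-(Complex.I * (⟪u, y⟫ : ℂ))) * g y := by
  have h2π : (2 * Real.pi) ≠ 0 := by positivity
  set G : V → ℂ := fun u => ∫ y, Complex.exp (-(Complex.I * (⟪u, y⟫ : ℂ))) * g y with hGdef
  have key : ∀ w : V, 𝓕 g w = G ((2 * Real.pi) • w) := by
    intro w
    rw [Real.fourier_eq']
    simp only [hGdef]
    refine integral_congr_ae (Filter.Eventually.of_forall fun v => ?_)
    show Complex.exp _ • g v = Complex.exp _ * g v
    rw [smul_eq_mul]
    congr 2
    rw [real_inner_smul_left, real_inner_comm w v]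
    push_cast
    ring
  have h𝓕 : Integrable (𝓕 g) := by
    have h : 𝓕 g = fun w => G ((2 * Real.pi) • w) := funext key
    rw [h]
    exact (integrable_comp_smul_iff volume G h2π).2 hG
  have hinv := hc.fourierInv_fourier_eq hi h𝓕
  have hx : g x = 𝓕⁻ (𝓕 g) x := (congrFun hinv x).symm
  rw [hx, Real.fourierInv_eq']
  have hpt : ∀ w : V, Complex.exp ((↑(2 * Real.pi * ⟪w, x⟫) : ℂ) * Complex.I) • 𝓕 g w
      = (fun u => Complex.exp (Complex.I * (⟪u, x⟫ : ℂ)) * G u) ((2 * Real.pi) • w) := by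
    intro w
    rw [smul_eq_mul, key w]
    congr 2
    rw [real_inner_smul_left]
    push_cast
    ring
  rw [integral_congr_ae (Filter.Eventually.of_forall hpt)]
  have hcs := MeasureTheory.Measure.integral_comp_smul (volume : Measure V)
    (fun u => Complex.exp (Complex.I * (⟪u, x⟫ : ℂ)) * G u) (2 * Real.pi)
  rw [hcs, _root_.abs_of_nonneg (by positivity), Complex.real_smul]

lemma inv_fin (d : ℕ) (g : (Fin d → ℝ) → ℂ) (hc : Continuous g) (hi : Integrable g)
    (hG : Integrable (fun u : Fin d → ℝ =>
      ∫ y : Fin d → ℝ, Complex.exp (-(Complex.I * ∑ j, (u j : ℂ) * (y j : ℂ))) * g y))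
    (x : Fin d → ℝ) :
    g x = (((2 * Real.pi) ^ d)⁻¹ : ℝ) *
      ∫ u : Fin d → ℝ, Complex.exp (Complex.I * ∑ j, (u j : ℂ) * (x j : ℂ)) *
        ∫ y : Fin d → ℝ, Complex.exp (-(Complex.I * ∑ j, (u j : ℂ) * (y j : ℂ))) * g y := by
  let e := (MeasurableEquiv.toLp 2 (Fin d → ℝ)).symm
  have hvp := EuclideanSpace.volume_preserving_symm_measurableEquiv_toLp (Fin d)
  have emb := e.measurableEmbedding
  have hinner : ∀ u y : EuclideanSpace ℝ (Fin d),
      ((⟪u, y⟫ : ℝ) : ℂ) = ∑ j, ((e u) j : ℂ) * ((e y) j : ℂ) := by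
    intro u y
    rw [PiLp.inner_apply]
    simp only [RCLike.inner_apply, conj_trivial]
    push_cast
    exact Finset.sum_congr rfl fun j _ => mul_comm _ _
  set origG : (Fin d → ℝ) → ℂ := fun u =>
    ∫ y : Fin d → ℝ, Complex.exp (-(Complex.I * ∑ j, (u j : ℂ) * (y j : ℂ))) * g y with horigG
  set g' : EuclideanSpace ℝ (Fin d) → ℂ := fun v => g (e v) with hg'
  have claim1 : ∀ u : EuclideanSpace ℝ (Fin d),
      (∫ y : EuclideanSpace ℝ (Fin d), Complex.exp (-(Complex.I * (⟪u, y⟫ : ℂ))) * g' y)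
        = origG (e u) := by
    intro u
    have hcomp := hvp.integral_comp emb
      (fun y0 : Fin d → ℝ => Complex.exp (-(Complex.I * ∑ j, ((e u) j : ℂ) * (y0 j : ℂ))) * g y0)
    refine Eq.trans ?_ hcomp
    refine integral_congr_ae (Filter.Eventually.of_forall fun y => ?_)
    simp only [hinner]
    rfl
  have hc' : Continuous g' :=
    hc.comp (PiLp.continuousLinearEquiv 2 ℝ (fun _ : Fin d => ℝ)).continuous
  have hi' : Integrable g' := (hvp.integrable_comp_emb emb).2 hi
  have hG' : Integrable (fun u : EuclideanSpace ℝ (Fin d) =>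
      ∫ y : EuclideanSpace ℝ (Fin d), Complex.exp (-(Complex.I * (⟪u, y⟫ : ℂ))) * g' y) := by
    have : (fun u : EuclideanSpace ℝ (Fin d) =>
        ∫ y : EuclideanSpace ℝ (Fin d), Complex.exp (-(Complex.I * (⟪u, y⟫ : ℂ))) * g' y)
        = origG ∘ e := funext claim1
    rw [this]
    exact (hvp.integrable_comp_emb emb).2 hG
  have h := inv_aux g' hc' hi' hG' (e.symm x)
  have hgx : g' (e.symm x) = g x := by
    show g (e (e.symm x)) = g x
    rw [e.apply_symm_apply]
  rw [hgx, finrank_euclideanSpace_fin] at h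
  rw [h]
  congr 1
  have hcomp := hvp.integral_comp emb
    (fun u0 : Fin d → ℝ => Complex.exp (Complex.I * ∑ j, (u0 j : ℂ) * (x j : ℂ)) * origG u0)
  refine Eq.trans ?_ (hcomp.trans ?_)
  · refine integral_congr_ae (Filter.Eventually.of_forall fun u => ?_)
    show Complex.exp (Complex.I * (⟪u, e.symm x⟫ : ℂ)) *
        (∫ y : EuclideanSpace ℝ (Fin d), Complex.exp (-(Complex.I * (⟪u, y⟫ : ℂ))) * g' y)
      = Complex.exp (Complex.I * ∑ j, ((e u) j : ℂ) * (x j : ℂ)) * origG (e u)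
    rw [claim1 u]
    have hx2 : ((⟪u, e.symm x⟫ : ℝ) : ℂ) = ∑ j, ((e u) j : ℂ) * ((x j : ℝ) : ℂ) := by
      rw [hinner u (e.symm x), e.apply_symm_apply]
    rw [hx2]
  · rw [horigG]

/-- Multivariate Fourier pricing valuation formula:
`E[P(X)] = (2π)^{-d} ∫ Φ_X(u+iR) P̂(u+iR) du`. -/
theorem fourier_valuation_formula (d : ℕ) (Ω : Type*) [MeasureSpace Ω]
    (μ : Measure Ω) [IsProbabilityMeasure μ]
    (X : Ω → (Fin d → ℝ)) (hX : Measurable X)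
    (ρ : (Fin d → ℝ) → ℝ) (hρ0 : ∀ x, 0 ≤ ρ x)
    (hρ : Measure.map X μ = volume.withDensity (fun x => ENNReal.ofReal (ρ x)))
    (P : (Fin d → ℝ) → ℝ) (hPc : Continuous P) (R : Fin d → ℝ)
    (hPR : Integrable (fun x : Fin d → ℝ => Real.exp (∑ j, R j * x j) * P x))
    (hPhat : Integrable (fun u : Fin d → ℝ =>
      ∫ y : Fin d → ℝ,
        Complex.exp (-(Complex.I * ∑ j, ((u j : ℂ) + Complex.I * (R j : ℂ)) * (y j : ℂ))) *
          (P y : ℂ)))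
    (hmom : Integrable (fun ω => Real.exp (-(∑ j, R j * X ω j))) μ) :
    ((∫ ω, P (X ω) ∂μ : ℝ) : ℂ) =
      (((2 * Real.pi) ^ d)⁻¹ : ℝ) *
        ∫ u : Fin d → ℝ,
          (∫ ω, Complex.exp (Complex.I * ∑ j, ((u j : ℂ) + Complex.I * (R j : ℂ)) * (X ω j : ℂ)) ∂μ) *
            ∫ y : Fin d → ℝ,
              Complex.exp (-(Complex.I * ∑ j, ((u j : ℂ) + Complex.I * (R j : ℂ)) * (y j : ℂ))) *
                (P y : ℂ) := by
  have hsplit : ∀ (u y : Fin d → ℝ),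
      (∑ j, ((u j : ℂ) + Complex.I * (R j : ℂ)) * (y j : ℂ))
        = (∑ j, (u j : ℂ) * (y j : ℂ)) + Complex.I * ∑ j, (R j : ℂ) * (y j : ℂ) := by
    intro u y
    rw [Finset.mul_sum, ← Finset.sum_add_distrib]
    exact Finset.sum_congr rfl fun j _ => by ring
  have hcast : ∀ (a y : Fin d → ℝ),
      ((∑ j, a j * y j : ℝ) : ℂ) = ∑ j, (a j : ℂ) * (y j : ℂ) := by
    intro a y; push_cast; rfl
  set g : (Fin d → ℝ) → ℂ := fun y => ((Real.exp (∑ j, R j * y j) * P y : ℝ) : ℂ) with hg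
  have hkernelA : ∀ (u y : Fin d → ℝ),
      Complex.exp (-(Complex.I * ∑ j, ((u j : ℂ) + Complex.I * (R j : ℂ)) * (y j : ℂ))) * (P y : ℂ)
        = Complex.exp (-(Complex.I * ∑ j, (u j : ℂ) * (y j : ℂ))) * g y := by
    intro u y
    have h1 : g y = Complex.exp (∑ j, (R j : ℂ) * (y j : ℂ)) * (P y : ℂ) := by
      rw [hg]; push_cast; ring
    rw [h1, ← mul_assoc, ← Complex.exp_add, hsplit]
    congr 2
    linear_combination (-(∑ j, (R j : ℂ) * (y j : ℂ))) * Complex.I_mul_I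
  have hkernelB : ∀ (u x : Fin d → ℝ),
      Complex.exp (Complex.I * ∑ j, ((u j : ℂ) + Complex.I * (R j : ℂ)) * (x j : ℂ))
        = ((Real.exp (-(∑ j, R j * x j)) : ℝ) : ℂ) *
            Complex.exp (Complex.I * ∑ j, (u j : ℂ) * (x j : ℂ)) := by
    intro u x
    have h2 : ((Real.exp (-(∑ j, R j * x j)) : ℝ) : ℂ)
        = Complex.exp (-(∑ j, (R j : ℂ) * (x j : ℂ))) := by
      push_cast; ring_nf
    rw [hsplit, h2, ← Complex.exp_add]
    congr 1
    linear_combination (∑ j, (R j : ℂ) * (x j : ℂ)) * Complex.I_mul_I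
  set G : (Fin d → ℝ) → ℂ := fun u =>
    ∫ y : Fin d → ℝ, Complex.exp (-(Complex.I * ∑ j, (u j : ℂ) * (y j : ℂ))) * g y with hGdef
  have hGeq : ∀ u : Fin d → ℝ,
      (∫ y : Fin d → ℝ,
        Complex.exp (-(Complex.I * ∑ j, ((u j : ℂ) + Complex.I * (R j : ℂ)) * (y j : ℂ))) *
          (P y : ℂ)) = G u := by
    intro u
    rw [hGdef]
    exact integral_congr_ae (Filter.Eventually.of_forall fun y => hkernelA u y)
  have hGint : Integrable G := by
    have h := funext hGeq
    exact h ▸ hPhat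
  have hgi : Integrable g := hPR.ofReal
  have hgc : Continuous g := by
    apply Complex.continuous_ofReal.comp
    exact (Real.continuous_exp.comp
      (continuous_finset_sum _ fun j _ => continuous_const.mul (continuous_apply j))).mul hPc
  have hPpt : ∀ x : Fin d → ℝ, (P x : ℂ) = (((2 * Real.pi) ^ d)⁻¹ : ℝ) *
      ∫ u : Fin d → ℝ,
        Complex.exp (Complex.I * ∑ j, ((u j : ℂ) + Complex.I * (R j : ℂ)) * (x j : ℂ)) * G u := by
    intro x
    have h0 : Real.exp (-(∑ j, R j * x j)) * (Real.exp (∑ j, R j * x j) * P x) = P x := by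
      rw [← mul_assoc, ← Real.exp_add]; simp
    have h0x : (P x : ℂ) = ((Real.exp (-(∑ j, R j * x j)) : ℝ) : ℂ) * g x := by
      show (P x : ℂ) = ((Real.exp (-(∑ j, R j * x j)) : ℝ) : ℂ) *
        ((Real.exp (∑ j, R j * x j) * P x : ℝ) : ℂ)
      exact_mod_cast h0.symm
    rw [h0x, inv_fin d g hgc hgi hGint x, mul_left_comm,
      ← MeasureTheory.integral_const_mul ((Real.exp (-(∑ j, R j * x j)) : ℝ) : ℂ)]
    congr 1
    refine integral_congr_ae (Filter.Eventually.of_forall fun u => ?_)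
    show ((Real.exp (-(∑ j, R j * x j)) : ℝ) : ℂ) *
        (Complex.exp (Complex.I * ∑ j, (u j : ℂ) * (x j : ℂ)) * G u)
      = Complex.exp (Complex.I * ∑ j, ((u j : ℂ) + Complex.I * (R j : ℂ)) * (x j : ℂ)) * G u
    rw [hkernelB u x]
    ring
  -- Fubini setup
  have hKmeas : AEStronglyMeasurable (fun p : Ω × (Fin d → ℝ) =>
      Complex.exp (Complex.I * ∑ j, ((p.2 j : ℂ) + Complex.I * (R j : ℂ)) * (X p.1 j : ℂ)) * G p.2)
      (μ.prod volume) := by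
    apply AEStronglyMeasurable.mul
    · apply Measurable.aestronglyMeasurable
      apply Complex.continuous_exp.measurable.comp
      apply Measurable.const_mul
      apply Finset.measurable_sum
      intro j _
      exact ((Complex.measurable_ofReal.comp
          ((measurable_pi_apply j).comp measurable_snd)).add_const _).mul
        (Complex.measurable_ofReal.comp ((measurable_pi_apply j).comp (hX.comp measurable_fst)))
    · exact hGint.aestronglyMeasurable.comp_snd
  have hbound : Integrable (fun p : Ω × (Fin d → ℝ) =>
      Real.exp (-(∑ j, R j * X p.1 j)) * ‖G p.2‖) (μ.prod volume) :=
    hmom.mul_prod hGint.norm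
  have hnorm : ∀ p : Ω × (Fin d → ℝ),
      ‖Complex.exp (Complex.I * ∑ j, ((p.2 j : ℂ) + Complex.I * (R j : ℂ)) * (X p.1 j : ℂ)) * G p.2‖
        = Real.exp (-(∑ j, R j * X p.1 j)) * ‖G p.2‖ := by
    intro p
    rw [norm_mul]
    congr 1
    rw [hkernelB p.2 (X p.1), norm_mul, ← hcast p.2 (X p.1), mul_comm Complex.I,
      Complex.norm_exp_ofReal_mul_I,
      Complex.norm_real, Real.norm_of_nonneg (Real.exp_pos _).le, mul_one]
  have hFub : Integrable (fun p : Ω × (Fin d → ℝ) =>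
      Complex.exp (Complex.I * ∑ j, ((p.2 j : ℂ) + Complex.I * (R j : ℂ)) * (X p.1 j : ℂ)) * G p.2)
      (μ.prod volume) :=
    hbound.mono' hKmeas (Filter.Eventually.of_forall fun p => le_of_eq (hnorm p))
  calc ((∫ ω, P (X ω) ∂μ : ℝ) : ℂ)
      = ∫ ω, ((P (X ω) : ℝ) : ℂ) ∂μ := integral_ofReal.symm
    _ = ∫ ω, ((((2 * Real.pi) ^ d)⁻¹ : ℝ) * ∫ u : Fin d → ℝ,
          Complex.exp (Complex.I * ∑ j, ((u j : ℂ) + Complex.I * (R j : ℂ)) * (X ω j : ℂ)) * G u) ∂μ := by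
        refine integral_congr_ae (Filter.Eventually.of_forall fun ω => ?_)
        exact hPpt (X ω)
    _ = (((2 * Real.pi) ^ d)⁻¹ : ℝ) * ∫ ω, (∫ u : Fin d → ℝ,
          Complex.exp (Complex.I * ∑ j, ((u j : ℂ) + Complex.I * (R j : ℂ)) * (X ω j : ℂ)) * G u) ∂μ :=
        MeasureTheory.integral_const_mul _ _
    _ = (((2 * Real.pi) ^ d)⁻¹ : ℝ) * ∫ u : Fin d → ℝ, (∫ ω,
          Complex.exp (Complex.I * ∑ j, ((u j : ℂ) + Complex.I * (R j : ℂ)) * (X ω j : ℂ)) * G u ∂μ) := by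
        rw [MeasureTheory.integral_integral_swap hFub]
    _ = (((2 * Real.pi) ^ d)⁻¹ : ℝ) * ∫ u : Fin d → ℝ,
          (∫ ω, Complex.exp (Complex.I * ∑ j, ((u j : ℂ) + Complex.I * (R j : ℂ)) * (X ω j : ℂ)) ∂μ)
            * G u := by
        congr 1
        refine integral_congr_ae (Filter.Eventually.of_forall fun u => ?_)
        exact MeasureTheory.integral_mul_const _ _
    _ = _ := by
        congr 1
        refine integral_congr_ae (Filter.Eventually.of_forall fun u => ?_)
        show (∫ ω, Complex.exp (Complex.I * ∑ j, ((u j : ℂ) + Complex.I * (R j : ℂ)) * (X ω j : ℂ)) ∂μ) * G u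
          = (∫ ω, Complex.exp (Complex.I * ∑ j, ((u j : ℂ) + Complex.I * (R j : ℂ)) * (X ω j : ℂ)) ∂μ) *
            ∫ y : Fin d → ℝ,
              Complex.exp (-(Complex.I * ∑ j, ((u j : ℂ) + Complex.I * (R j : ℂ)) * (y j : ℂ))) * (P y : ℂ)
        rw [hGeq u]
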